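/- If B, C are real skew-symmetric n×n matrices with all eigenvalues in the open interval i(-π, π) and exp(B) = exp(C), then B = C. -/

import Mathlib

open Matrix

section aux
open scoped Matrix.Norms.L2Operator
variable {n : ℕ}

noncomputable local instance matCStar : CStarAlgebra (Matrix (Fin n) (Fin n) ℂ) := Matrix.instCStarAlgebra

lemma skew_exp_log_aux (M : Matrix (Fin n) (Fin n) ℂ) (hM : Mᴴ = -M)
    (hsM : ∀ μ ∈ spectrum ℂ M, μ.re = 0 ∧ |μ.im| < Real.pi) :
    cfc Complex.log (NormedSpace.exp M) = M := by
  have hnM : IsStarNormal M := ⟨by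
    rw [Matrix.star_eq_conjTranspose, hM]; exact (Commute.refl M).neg_left⟩
  have hcont : ContinuousOn Complex.log (Complex.exp '' spectrum ℂ M) := by
    rintro z ⟨μ, hμ, rfl⟩
    refine (continuousAt_clog ?_).continuousWithinAt
    obtain ⟨h1, h2⟩ := hsM μ hμ
    rw [Complex.mem_slitPlane_iff, Complex.exp_re, Complex.exp_im, h1]
    by_cases hsin : Real.sin μ.im = 0
    · left
      have him : μ.im = 0 := by
        rcases Real.sin_eq_zero_iff.mp hsin with ⟨k, hk⟩
        have habs : |(k : ℝ)| * Real.pi < Real.pi := by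
          have : |μ.im| = |(k:ℝ)| * Real.pi := by
            rw [← hk, abs_mul, abs_of_pos Real.pi_pos]
          linarith [this ▸ h2]
        have hk0 : k = 0 := by
          by_contra hk0
          have h1k : (1:ℝ) ≤ |(k:ℝ)| := by
            exact_mod_cast Int.one_le_abs (by exact_mod_cast hk0)
          nlinarith [Real.pi_pos]
        rw [← hk, hk0]; simp
      simp [him]
    · right; positivity
  rw [← CFC.complex_exp_eq_normedSpace_exp, ← cfc_comp' Complex.log Complex.exp M hcont]
  have : cfc (fun z => Complex.log (Complex.exp z)) M = cfc (id : ℂ → ℂ) M := by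
    refine cfc_congr fun μ hμ => ?_
    obtain ⟨h1, h2⟩ := hsM μ hμ
    rw [abs_lt] at h2
    exact Complex.log_exp h2.1 h2.2.le
  rw [this, cfc_id ℂ M]

lemma skew_exp_inj (A A' : Matrix (Fin n) (Fin n) ℂ)
    (hA : Aᴴ = -A) (hA' : A'ᴴ = -A')
    (hs : ∀ μ ∈ spectrum ℂ A, μ.re = 0 ∧ |μ.im| < Real.pi)
    (hs' : ∀ μ ∈ spectrum ℂ A', μ.re = 0 ∧ |μ.im| < Real.pi)
    (h : NormedSpace.exp A = NormedSpace.exp A') : A = A' := by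
  calc A = cfc Complex.log (NormedSpace.exp A) := (skew_exp_log_aux A hA hs).symm
    _ = cfc Complex.log (NormedSpace.exp A') := by rw [h]
    _ = A' := skew_exp_log_aux A' hA' hs'

end aux

section aux2
open scoped Matrix.Norms.L2Operator
variable {n : ℕ}

lemma map_exp_real (M : Matrix (Fin n) (Fin n) ℝ) :
    (NormedSpace.exp M).map Complex.ofReal = NormedSpace.exp (M.map Complex.ofReal) := by
  have hcont : Continuous fun A : Matrix (Fin n) (Fin n) ℝ => A.map (Complex.ofReal) :=
    Continuous.matrix_map continuous_id Complex.continuous_ofReal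
  have h := NormedSpace.map_exp_of_mem_ball (𝕂 := ℝ)
    (Complex.ofRealHom.mapMatrix : Matrix (Fin n) (Fin n) ℝ →+* Matrix (Fin n) (Fin n) ℂ) hcont M
    ((NormedSpace.expSeries_radius_eq_top ℝ (Matrix (Fin n) (Fin n) ℝ)).symm ▸ edist_lt_top _ _)
  simp only [RingHom.mapMatrix_apply] at h
  rw [show ⇑Complex.ofRealHom = (Complex.ofReal) from rfl] at h
  rw [h]

end aux2


/-- The matrix exponential is injective on real skew-symmetric matrices whose
eigenvalues lie in the open strip `i(-π, π)`. -/
theorem exp_injective_on_skew_small_spectrum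
    (n : ℕ) (B C : Matrix (Fin n) (Fin n) ℝ)
    (hB : Bᵀ = -B) (hC : Cᵀ = -C)
    (hBspec : ∀ μ ∈ spectrum ℂ (B.map (Complex.ofReal)), μ.re = 0 ∧ |μ.im| < Real.pi)
    (hCspec : ∀ μ ∈ spectrum ℂ (C.map (Complex.ofReal)), μ.re = 0 ∧ |μ.im| < Real.pi)
    (hexp : NormedSpace.exp B = NormedSpace.exp C) :
    B = C := by
  have skewmap : ∀ (M : Matrix (Fin n) (Fin n) ℝ), Mᵀ = -M →
      (M.map Complex.ofReal)ᴴ = -(M.map Complex.ofReal) := by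
    intro M hM
    ext i j
    have hij : M j i = -(M i j) := by simpa using congrFun (congrFun hM i) j
    simp [Matrix.conjTranspose_apply, Complex.conj_ofReal, hij]
  have key := skew_exp_inj (B.map Complex.ofReal) (C.map Complex.ofReal)
    (skewmap B hB) (skewmap C hC) hBspec hCspec
    (by rw [← map_exp_real, ← map_exp_real]
        exact congrArg (fun M => M.map Complex.ofReal) hexp)
  ext i j
  have := congrFun (congrFun key i) j
  simpa using this
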